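/- If T is a bounded invertible normal operator on a complex Hilbert space with σ(T) ⊆ {z : |z| = 1 or |z| = r}, then there is an orthogonal decomposition H = H_1 ⊕ H_2 into reducing subspaces for T such that T restricted to H_1 is unitary and (1/r)·T restricted to H_2 is unitary. -/

import Mathlib

open ContinuousLinearMap

/-- An invertible bounded normal operator with spectrum in {|z| = 1} ∪ {|z| = r} decomposes
orthogonally as H = H₁ ⊕ H₁ᗮ into reducing subspaces on which T is respectively unitary and
r times a unitary. -/
theorem stmt_7 {H : Type*} [NormedAddCommGroup H] [InnerProductSpace ℂ H] [CompleteSpace H]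
    (r : ℝ) (hr0 : 0 < r) (hr1 : r < 1) (T : H →L[ℂ] H) (hT : IsStarNormal T)
    (hinv : IsUnit T) (hspec : spectrum ℂ T ⊆ {z : ℂ | ‖z‖ = 1 ∨ ‖z‖ = r}) :
    ∃ H₁ : Submodule ℂ H, IsClosed (H₁ : Set H) ∧
      (∀ x ∈ H₁, T x ∈ H₁) ∧ (∀ x ∈ H₁ᗮ, T x ∈ H₁ᗮ) ∧
      (∀ x ∈ H₁, adjoint T x ∈ H₁) ∧ (∀ x ∈ H₁ᗮ, adjoint T x ∈ H₁ᗮ) ∧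
      (∀ x ∈ H₁, ‖T x‖ = ‖x‖) ∧ Set.SurjOn T H₁ H₁ ∧
      (∀ x ∈ H₁ᗮ, ‖T x‖ = r * ‖x‖) ∧ Set.SurjOn T H₁ᗮ H₁ᗮ := by
  classical
  haveI := hT
  set c : ℝ := (1 + r) / 2 with hc
  have hrc : r < c := by simp only [hc]; linarith
  have hc1 : c < 1 := by simp only [hc]; linarith
  set f : ℂ → ℂ := fun z => if c < ‖z‖ then 1 else 0 with hfdef
  have hf1 : ∀ z : ℂ, ‖z‖ = 1 → f z = 1 := by
    intro z hz; simp only [hfdef]; rw [if_pos (by rw [hz]; exact hc1)]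
  have hf0 : ∀ z : ℂ, ‖z‖ = r → f z = 0 := by
    intro z hz; simp only [hfdef]; rw [if_neg (by rw [hz]; exact not_lt.2 hrc.le)]
  have hf_cont : ContinuousOn f (spectrum ℂ T) := by
    intro z hz
    rcases hspec hz with h1 | h2
    · have hopen : IsOpen {w : ℂ | c < ‖w‖} := isOpen_lt continuous_const continuous_norm
      have hev : ∀ᶠ w in nhds z, f w = 1 := by
        filter_upwards [hopen.mem_nhds (by simpa only [Set.mem_setOf_eq, h1] using hc1)] with w hw
        simp only [hfdef]; rw [if_pos hw]
      exact ((Filter.EventuallyEq.continuousAt (y := 1) hev)).continuousWithinAt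
    · have hopen : IsOpen {w : ℂ | ‖w‖ < c} := isOpen_lt continuous_norm continuous_const
      have hev : ∀ᶠ w in nhds z, f w = 0 := by
        filter_upwards [hopen.mem_nhds (by simpa only [Set.mem_setOf_eq, h2] using hrc)] with w hw
        simp only [hfdef]; rw [if_neg (not_lt.2 hw.le)]
      exact ((Filter.EventuallyEq.continuousAt (y := 0) hev)).continuousWithinAt
  set p : H →L[ℂ] H := cfc f T with hpdef
  have hff : ∀ z : ℂ, f z * f z = f z := by
    intro z; simp only [hfdef]; split <;> simp
  have hpp : p * p = p := by
    rw [hpdef, ← cfc_mul f f T hf_cont hf_cont]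
    exact cfc_congr fun z _ => hff z
  have hp_sa : IsSelfAdjoint p := by
    rw [isSelfAdjoint_iff, hpdef, ← cfc_star f T]
    exact cfc_congr fun z _ => by simp only [hfdef]; split <;> simp
  have hTp : T * p = p * T := by
    conv_lhs => rw [← cfc_id ℂ T]
    conv_rhs => rw [← cfc_id ℂ T]
    rw [hpdef, ← cfc_mul _ f T (continuousOn_id) hf_cont,
      ← cfc_mul f _ T hf_cont (continuousOn_id)]
    exact cfc_congr fun z _ => mul_comm z (f z)
  have hT'p : star T * p = p * star T := by
    have hsT : star T = cfc (fun z : ℂ => star z) T := by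
      have h := cfc_star (fun z : ℂ => z) T
      rw [cfc_id' ℂ T] at h
      exact h.symm
    rw [hsT, hpdef, ← cfc_mul _ f T (continuous_star.continuousOn) hf_cont,
      ← cfc_mul f _ T hf_cont (continuous_star.continuousOn)]
    exact cfc_congr fun z _ => mul_comm _ (f z)
  -- key spectral identity
  have hkey : star T * T = (((r : ℂ) ^ 2) • (1 : H →L[ℂ] H)) + (1 - (r : ℂ) ^ 2) • p := by
    have hsT2 : cfc (fun z : ℂ => star z) T = star T := by
      have h := cfc_star (fun z : ℂ => z) T
      rw [cfc_id' ℂ T] at h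
      exact h
    have h1 : cfc (fun z : ℂ => star z * z) T = star T * T := by
      rw [cfc_mul (fun z : ℂ => star z) (fun z : ℂ => z) T (continuous_star.continuousOn)
        continuousOn_id, hsT2, cfc_id' ℂ T]
    rw [← h1]
    have h2 : cfc (fun z : ℂ => star z * z) T
        = cfc (fun z : ℂ => (r : ℂ) ^ 2 + (1 - (r : ℂ) ^ 2) * f z) T := by
      apply cfc_congr
      intro z hz
      show star z * z = (r : ℂ) ^ 2 + (1 - (r : ℂ) ^ 2) * f z
      have hzz : star z * z = ((‖z‖ : ℂ)) ^ 2 := by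
        rw [Complex.star_def, ← Complex.normSq_eq_conj_mul_self]
        simp [Complex.normSq_eq_norm_sq]
      rcases hspec hz with h | h
      · rw [hzz, hf1 z h, h]; norm_num
      · rw [hzz, hf0 z h, h]; ring
    rw [h2, cfc_const_add ((r : ℂ) ^ 2) (fun z => (1 - (r : ℂ) ^ 2) * f z) T
      (continuousOn_const.mul hf_cont), cfc_const_mul _ f T hf_cont,
      Algebra.algebraMap_eq_smul_one]
  -- the subspace
  set H₁ : Submodule ℂ H := LinearMap.ker ((1 - p : H →L[ℂ] H) : H →ₗ[ℂ] H) with hH1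
  have hmem : ∀ x, x ∈ H₁ ↔ p x = x := by
    intro x
    rw [hH1, LinearMap.mem_ker]
    simp only [ContinuousLinearMap.coe_coe, ContinuousLinearMap.coe_sub', Pi.sub_apply, ContinuousLinearMap.one_apply]
    rw [sub_eq_zero]
    exact eq_comm
  have hadj : ContinuousLinearMap.adjoint p = p := isSelfAdjoint_iff'.mp hp_sa
  have hpip : ∀ u y : H, inner ℂ (p u) y = (inner ℂ u (p y) : ℂ) := by
    intro u y
    conv_lhs => rw [← hadj]
    exact ContinuousLinearMap.adjoint_inner_left p y u
  have hppy : ∀ y : H, p (p y) = p y := by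
    intro y
    rw [← ContinuousLinearMap.mul_apply, hpp]
  have hperp : ∀ y, y ∈ H₁ᗮ ↔ p y = 0 := by
    intro y
    constructor
    · intro hy
      have h1 : p y ∈ H₁ := (hmem _).2 (hppy y)
      have h2 : (inner ℂ (p y) y : ℂ) = 0 := (Submodule.mem_orthogonal _ y).1 hy (p y) h1
      have h3 : (inner ℂ (p y) (p y) : ℂ) = 0 := by
        rw [hpip, hppy, ← inner_conj_symm, h2, map_zero]
      exact inner_self_eq_zero.mp h3
    · intro hy
      rw [Submodule.mem_orthogonal]
      intro u hu
      rw [← (hmem u).1 hu, hpip, hy, inner_zero_right]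
  have hTcomm : ∀ x : H, p (T x) = T (p x) := by
    intro x
    rw [← ContinuousLinearMap.mul_apply, ← hTp, ContinuousLinearMap.mul_apply]
  have hT'comm : ∀ x : H, p (ContinuousLinearMap.adjoint T x) = ContinuousLinearMap.adjoint T (p x) := by
    intro x
    rw [← ContinuousLinearMap.star_eq_adjoint, ← ContinuousLinearMap.mul_apply, ← hT'p,
      ContinuousLinearMap.mul_apply]
  -- invertibility
  obtain ⟨U, hU⟩ := hinv
  have hUp : Commute (U : H →L[ℂ] H) p := by rw [Commute, SemiconjBy, hU]; exact hTp
  have hU'p : Commute ((U⁻¹ : (H →L[ℂ] H)ˣ) : H →L[ℂ] H) p := hUp.units_inv_left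
  have hU'comm : ∀ x : H, p (((U⁻¹ : (H →L[ℂ] H)ˣ) : H →L[ℂ] H) x)
      = ((U⁻¹ : (H →L[ℂ] H)ˣ) : H →L[ℂ] H) (p x) := by
    intro x
    rw [← ContinuousLinearMap.mul_apply, ← hU'p, ContinuousLinearMap.mul_apply]
  have hTU' : ∀ y : H, T (((U⁻¹ : (H →L[ℂ] H)ˣ) : H →L[ℂ] H) y) = y := by
    intro y
    rw [← hU, ← ContinuousLinearMap.mul_apply, Units.mul_inv, ContinuousLinearMap.one_apply]
  -- norm identities
  have hTT1 : ∀ x, p x = x → ContinuousLinearMap.adjoint T (T x) = x := by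
    intro x hpx
    rw [← ContinuousLinearMap.star_eq_adjoint, ← ContinuousLinearMap.mul_apply, hkey]
    simp only [ContinuousLinearMap.add_apply, ContinuousLinearMap.smul_apply,
      ContinuousLinearMap.one_apply, hpx]
    rw [← add_smul]
    norm_num
  have hTT2 : ∀ x, p x = 0 → ContinuousLinearMap.adjoint T (T x) = ((r : ℂ) ^ 2) • x := by
    intro x hpx
    rw [← ContinuousLinearMap.star_eq_adjoint, ← ContinuousLinearMap.mul_apply, hkey]
    simp only [ContinuousLinearMap.add_apply, ContinuousLinearMap.smul_apply,
      ContinuousLinearMap.one_apply, hpx, smul_zero, add_zero]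
  refine ⟨H₁, ?_, ?_, ?_, ?_, ?_, ?_, ?_, ?_, ?_⟩
  · exact ContinuousLinearMap.isClosed_ker (1 - p)
  · intro x hx
    exact (hmem _).2 (by rw [hTcomm, (hmem x).1 hx])
  · intro x hx
    exact (hperp _).2 (by rw [hTcomm, (hperp x).1 hx, map_zero])
  · intro x hx
    exact (hmem _).2 (by rw [hT'comm, (hmem x).1 hx])
  · intro x hx
    exact (hperp _).2 (by rw [hT'comm, (hperp x).1 hx, map_zero])
  · intro x hx
    have hinner : (inner ℂ (T x) (T x) : ℂ) = inner ℂ x x := by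
      have h := ContinuousLinearMap.adjoint_inner_left T x (T x)
      rw [hTT1 x ((hmem x).1 hx)] at h
      exact h.symm
    have h2 := inner_self_eq_norm_sq_to_K (𝕜 := ℂ) (T x)
    rw [hinner, inner_self_eq_norm_sq_to_K] at h2
    have h3 : ‖x‖ ^ 2 = ‖T x‖ ^ 2 := by exact_mod_cast h2
    nlinarith [norm_nonneg (T x), norm_nonneg x]
  · intro y hy
    refine ⟨((U⁻¹ : (H →L[ℂ] H)ˣ) : H →L[ℂ] H) y, ?_, hTU' y⟩
    have hpy : p y = y := (hmem y).1 hy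
    exact (hmem _).2 (by rw [hU'comm, hpy])
  · intro x hx
    have hpx : p x = 0 := (hperp x).1 hx
    have hinner : (inner ℂ (T x) (T x) : ℂ) = ((r : ℂ) ^ 2) * inner ℂ x x := by
      have h := ContinuousLinearMap.adjoint_inner_left T x (T x)
      rw [hTT2 x hpx, inner_smul_left] at h
      rw [← h]
      congr 1
      simp [← Complex.ofReal_pow]
    have h2 := inner_self_eq_norm_sq_to_K (𝕜 := ℂ) (T x)
    rw [hinner, inner_self_eq_norm_sq_to_K] at h2
    have h3 : r ^ 2 * ‖x‖ ^ 2 = ‖T x‖ ^ 2 := by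
      have h2' : ((r ^ 2 * ‖x‖ ^ 2 : ℝ) : ℂ) = ((‖T x‖ ^ 2 : ℝ) : ℂ) := by push_cast; exact h2
      exact_mod_cast h2'
    nlinarith [norm_nonneg (T x), norm_nonneg x, mul_nonneg hr0.le (norm_nonneg x)]
  · intro y hy
    refine ⟨((U⁻¹ : (H →L[ℂ] H)ˣ) : H →L[ℂ] H) y, ?_, hTU' y⟩
    have hpy : p y = 0 := (hperp y).1 hy
    exact (hperp _).2 (by rw [hU'comm, hpy, map_zero])
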